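/- Let q : ℤ² → ℤ be defined by q(v₁, v₂) = v₁² + v₂² - n·v₁·v₂ for an integer n ≥ 2. Define a sequence (aᵢ) by a₀ = 0, a₁ = 1, aᵢ₊₁ = n·aᵢ - aᵢ₋₁. Then the set of vectors v ∈ ℤ≥0² with q(v) = 1 equals {(aᵢ, aᵢ₊₁) : i ≥ 0} ∪ {(aᵢ₊₁, aᵢ) : i ≥ 0}. -/
import Mathlib

section aux

variable (n : ℤ) (hn : 2 ≤ n) (a : ℕ → ℤ)
    (ha0 : a 0 = 0) (ha1 : a 1 = 1)
    (harec : ∀ i : ℕ, a (i + 2) = n * a (i + 1) - a i)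

include hn ha0 ha1 harec

lemma aux_nonneg : ∀ i : ℕ, 0 ≤ a i ∧ a i ≤ a (i + 1) := by
  intro i
  induction i with
  | zero => simp [ha0, ha1]
  | succ k ih =>
    obtain ⟨h1, h2⟩ := ih
    refine ⟨le_trans h1 h2, ?_⟩
    rw [harec k]
    nlinarith

lemma aux_q : ∀ i : ℕ, a i ^ 2 + a (i + 1) ^ 2 - n * a i * a (i + 1) = 1 := by
  intro i
  induction i with
  | zero => simp [ha0, ha1]
  | succ k ih =>
    rw [harec k]
    nlinarith [ih]

lemma aux_main : ∀ m : ℕ, ∀ X Y : ℤ, X.toNat ≤ m → 0 ≤ X → X ≤ Y →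
    X ^ 2 + Y ^ 2 - n * X * Y = 1 → ∃ i, X = a i ∧ Y = a (i + 1) := by
  intro m
  induction m with
  | zero =>
    intro X Y hm hX hXY hq
    have hX0 : X = 0 := by omega
    subst hX0
    have hY : Y = 1 := by nlinarith
    exact ⟨0, by simp [ha0, ha1, hY]⟩
  | succ k ih =>
    intro X Y hm hX hXY hq
    rcases eq_or_lt_of_le hX with h0 | h0
    · have hX0 : X = 0 := h0.symm
      subst hX0
      have hY : Y = 1 := by nlinarith
      exact ⟨0, by simp [ha0, ha1, hY]⟩
    · -- X ≥ 1
      set Y' := n * X - Y with hY'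
      have hYpos : 0 < Y := lt_of_lt_of_le h0 hXY
      have hprod : Y * Y' = X ^ 2 - 1 := by rw [hY']; nlinarith
      have hY'nn : 0 ≤ Y' := by nlinarith
      have hY'lt : Y' < X := by nlinarith
      have hq' : Y' ^ 2 + X ^ 2 - n * Y' * X = 1 := by rw [hY']; nlinarith
      have htn : Y'.toNat ≤ k := by omega
      obtain ⟨i, hi1, hi2⟩ := ih Y' X htn hY'nn hY'lt.le hq'
      refine ⟨i + 1, hi2, ?_⟩
      rw [harec i, ← hi1, ← hi2]
      omega

end aux

/-- The positive vectors of `q`-value 1 for the Tits form of the `n`-Kronecker quiver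
are exactly the dimension vectors of preprojective and preinjective indecomposables. -/
theorem stmt_0 (n : ℤ) (hn : 2 ≤ n) (a : ℕ → ℤ)
    (ha0 : a 0 = 0) (ha1 : a 1 = 1)
    (harec : ∀ i : ℕ, a (i + 2) = n * a (i + 1) - a i) :
    {v : ℤ × ℤ | 0 ≤ v.1 ∧ 0 ≤ v.2 ∧ v.1 ^ 2 + v.2 ^ 2 - n * v.1 * v.2 = 1} =
      {v : ℤ × ℤ | ∃ i : ℕ, v = (a i, a (i + 1))} ∪
        {v : ℤ × ℤ | ∃ i : ℕ, v = (a (i + 1), a i)} := by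
  ext ⟨x, y⟩
  simp only [Set.mem_setOf_eq, Set.mem_union, Prod.mk.injEq]
  constructor
  · rintro ⟨hx, hy, hq⟩
    rcases le_total x y with h | h
    · obtain ⟨i, h1, h2⟩ := aux_main n hn a ha0 ha1 harec x.toNat x y le_rfl hx h hq
      exact Or.inl ⟨i, h1, h2⟩
    · obtain ⟨i, h1, h2⟩ := aux_main n hn a ha0 ha1 harec y.toNat y x le_rfl hy h (by nlinarith)
      exact Or.inr ⟨i, h2, h1⟩
  · rintro (⟨i, h1, h2⟩ | ⟨i, h1, h2⟩) <;> subst h1 <;> subst h2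
    · obtain ⟨hn1, hn2⟩ := aux_nonneg n hn a ha0 ha1 harec i
      exact ⟨hn1, le_trans hn1 hn2, aux_q n hn a ha0 ha1 harec i⟩
    · obtain ⟨hn1, hn2⟩ := aux_nonneg n hn a ha0 ha1 harec i
      refine ⟨le_trans hn1 hn2, hn1, ?_⟩
      have := aux_q n hn a ha0 ha1 harec i
      nlinarith
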